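/- Let γ : [0,1] → ℝ² have finite p-variation for some 1 ≤ p < 2. Then the image γ([0,1]) has two-dimensional Lebesgue measure zero. -/

import Mathlib

open Set
open scoped ENNReal NNReal

/-- The `p`-th power of the `p`-variation of `γ` over `[0,1]`:
the supremum over all finite partitions `0 ≤ t 0 ≤ t 1 ≤ ⋯ ≤ t n ≤ 1`
of `∑ ‖γ (t (i+1)) - γ (t i)‖ ^ p`. -/
noncomputable def pVariation {E : Type*} [NormedAddCommGroup E] (p : ℝ) (γ : ℝ → E) : ℝ≥0∞ :=
  ⨆ (n : ℕ) (t : ℕ → ℝ) (_ : Monotone t) (_ : ∀ i, t i ∈ Set.Icc (0:ℝ) 1),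
    ∑ i ∈ Finset.range n, (‖γ (t (i + 1)) - γ (t i)‖₊ : ℝ≥0∞) ^ p

lemma aux_cover_Icc (a : ℕ → ℝ) (n : ℕ) (x : ℝ) (hx : x ∈ Icc (a 0) (a (n+1))) :
    ∃ i ≤ n, x ∈ Icc (a i) (a (i+1)) := by
  induction n with
  | zero => exact ⟨0, le_refl _, hx⟩
  | succ n ih =>
    rcases le_or_gt x (a (n+1)) with h | h
    · obtain ⟨i, hi, hxi⟩ := ih ⟨hx.1, h⟩
      exact ⟨i, hi.trans (Nat.le_succ _), hxi⟩
    · exact ⟨n+1, le_refl _, ⟨h.le, hx.2⟩⟩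

lemma aux_sum_le_pVariation {E : Type*} [NormedAddCommGroup E] (p : ℝ) (γ : ℝ → E) (n : ℕ)
    (t s : ℕ → ℝ) (_ht : Monotone t) (ht01 : ∀ i, t i ∈ Icc (0:ℝ) 1)
    (hs : ∀ i, s i ∈ Icc (t i) (t (i+1))) :
    ∑ i ∈ Finset.range n, (‖γ (s i) - γ (t i)‖₊ : ℝ≥0∞) ^ p ≤ pVariation p γ := by
  set u : ℕ → ℝ := fun j => if j % 2 = 0 then t (j / 2) else s (j / 2) with hu
  have hu2 : ∀ i, u (2*i) = t i := by intro i; simp [hu, Nat.mul_div_cancel_left i two_pos]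
  have hu21 : ∀ i, u (2*i+1) = s i := by
    intro i
    have h1 : (2*i+1) % 2 = 1 := by omega
    have h2 : (2*i+1) / 2 = i := by omega
    simp [hu, h1, h2]
  have humono : Monotone u := by
    apply monotone_nat_of_le_succ
    intro j
    rcases Nat.even_or_odd j with ⟨k, hk⟩ | ⟨k, hk⟩
    · subst hk
      have e1 : u (k + k) = t k := by rw [show k + k = 2*k by ring, hu2]
      have e2 : u (k + k + 1) = s k := by rw [show k + k = 2*k by ring, hu21]
      rw [e1, e2]; exact (hs k).1
    · subst hk
      have e1 : u (2*k + 1) = s k := hu21 k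
      have e2 : u (2*k + 1 + 1) = t (k+1) := by rw [show 2*k+1+1 = 2*(k+1) by ring, hu2]
      rw [e1, e2]; exact (hs k).2
  have hu01 : ∀ j, u j ∈ Icc (0:ℝ) 1 := by
    intro j
    rcases Nat.even_or_odd j with ⟨k, hk⟩ | ⟨k, hk⟩
    · subst hk; rw [show k + k = 2*k by ring, hu2]; exact ht01 k
    · subst hk; rw [hu21]
      exact ⟨(ht01 k).1.trans (hs k).1, (hs k).2.trans (ht01 (k+1)).2⟩
  have key : ∑ i ∈ Finset.range n, (‖γ (s i) - γ (t i)‖₊ : ℝ≥0∞) ^ p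
      ≤ ∑ j ∈ Finset.range (2*n), (‖γ (u (j+1)) - γ (u j)‖₊ : ℝ≥0∞) ^ p := by
    have heq : ∑ i ∈ Finset.range n, (‖γ (s i) - γ (t i)‖₊ : ℝ≥0∞) ^ p
        = ∑ j ∈ (Finset.range n).image (fun i => 2*i),
            (‖γ (u (j+1)) - γ (u j)‖₊ : ℝ≥0∞) ^ p := by
      rw [Finset.sum_image (by intro a _ b _ h; dsimp only at h; omega)]
      apply Finset.sum_congr rfl
      intro i _
      rw [hu2, hu21]
    rw [heq]
    apply Finset.sum_le_sum_of_subset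
    intro j hj
    simp only [Finset.mem_image, Finset.mem_range] at hj ⊢
    obtain ⟨i, hi, rfl⟩ := hj
    omega
  refine key.trans ?_
  exact le_iSup_of_le (2*n) (le_iSup_of_le u (le_iSup_of_le humono (le_iSup_of_le hu01 le_rfl)))

theorem stmt13 (p : ℝ) (hp : 1 ≤ p) (hp2 : p < 2)
    (γ : ℝ → EuclideanSpace ℝ (Fin 2))
    (hc : ContinuousOn γ (Icc 0 1)) (hγ : pVariation p γ < ⊤) :
    MeasureTheory.volume (γ '' Icc 0 1) = 0 := by
  have hp0 : 0 ≤ p := by linarith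
  have h2p : 0 < 2 - p := by linarith
  set C := MeasureTheory.volume (Metric.ball (0 : EuclideanSpace ℝ (Fin 2)) 1) with hCdef
  have key : ∀ ε : ℝ, 0 < ε → MeasureTheory.volume (γ '' Icc 0 1)
      ≤ ENNReal.ofReal (ε ^ (2-p)) * (C * pVariation p γ) := by
    intro ε hε
    obtain ⟨δ, hδ, hunif⟩ := (Metric.uniformContinuousOn_iff.1
      (isCompact_Icc.uniformContinuousOn_of_continuous hc)) ε hε
    obtain ⟨n, hn⟩ := exists_nat_one_div_lt hδ
    set N := n + 1 with hNdef
    have hN0 : (0:ℝ) < (N:ℝ) := by positivity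
    set t : ℕ → ℝ := fun i => min ((i:ℝ)/N) 1 with htdef
    have htmono : Monotone t := by
      intro i j h
      exact min_le_min (by gcongr) le_rfl
    have ht01 : ∀ i, t i ∈ Icc (0:ℝ) 1 := fun i =>
      ⟨le_min (by positivity) zero_le_one, min_le_right _ _⟩
    have ht0 : t 0 = 0 := by simp [htdef]
    have htN : t N = 1 := by
      simp [htdef, div_self hN0.ne']
    have hstep : ∀ i, t (i+1) ≤ t i + 1/N := by
      intro i
      have : t i + 1/N = min ((i:ℝ)/N + 1/N) (1 + 1/N) := by
        rw [htdef]; rw [min_add_add_right]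
      rw [this]
      apply min_le_min
      · push_cast
        rw [add_div]
      · have : (0:ℝ) ≤ 1/N := by positivity
        linarith
    have hsub : ∀ i, Icc (t i) (t (i+1)) ⊆ Icc (0:ℝ) 1 := fun i =>
      Icc_subset_Icc (ht01 i).1 (ht01 (i+1)).2
    have hex : ∀ i : ℕ, ∃ x ∈ Icc (t i) (t (i+1)),
        IsMaxOn (fun y => ‖γ y - γ (t i)‖) (Icc (t i) (t (i+1))) x := by
      intro i
      exact isCompact_Icc.exists_isMaxOn (nonempty_Icc.2 (htmono (Nat.le_succ i)))
        (((hc.mono (hsub i)).sub continuousOn_const).norm)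
    choose s hs hmax using hex
    set r : ℕ → ℝ := fun i => ‖γ (s i) - γ (t i)‖ with hrdef
    have hr0 : ∀ i, 0 ≤ r i := fun i => norm_nonneg _
    have hrε : ∀ i, r i ≤ ε := by
      intro i
      have h1 : t i ≤ s i := (hs i).1
      have h2 : s i ≤ t (i+1) := (hs i).2
      have h3 := hstep i
      have hd : dist (s i) (t i) < δ := by
        rw [Real.dist_eq, abs_of_nonneg (by linarith)]
        have : (N:ℝ) = (n:ℝ) + 1 := by push_cast [hNdef]; ring
        rw [this] at h3
        linarith
      have := hunif _ (hsub i ⟨h1, h2⟩) _ (ht01 i) hd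
      rw [dist_eq_norm] at this
      exact this.le
    have hcov : γ '' Icc 0 1 ⊆ ⋃ i ∈ Finset.range N, Metric.closedBall (γ (t i)) (r i) := by
      rintro _ ⟨x, hx, rfl⟩
      rw [← ht0, ← htN] at hx
      obtain ⟨i, hi, hxi⟩ := aux_cover_Icc t n x hx
      refine mem_iUnion₂.2 ⟨i, Finset.mem_range.2 (Nat.lt_succ_of_le hi), ?_⟩
      have := hmax i hxi
      simpa [Metric.mem_closedBall, dist_eq_norm, hrdef] using this
    have hsumvar : ∑ i ∈ Finset.range N, ENNReal.ofReal (r i ^ p) ≤ pVariation p γ := by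
      have : ∀ i, ENNReal.ofReal (r i ^ p) = (‖γ (s i) - γ (t i)‖₊ : ℝ≥0∞) ^ p := by
        intro i
        rw [← ENNReal.ofReal_rpow_of_nonneg (hr0 i) hp0, hrdef]
        rw [ofReal_norm, enorm_eq_nnnorm]
      simp_rw [this]
      exact aux_sum_le_pVariation p γ N t s htmono ht01 hs
    calc MeasureTheory.volume (γ '' Icc 0 1)
        ≤ ∑ i ∈ Finset.range N, MeasureTheory.volume (Metric.closedBall (γ (t i)) (r i)) :=
          (MeasureTheory.measure_mono hcov).trans (MeasureTheory.measure_biUnion_finset_le _ _)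
      _ = ∑ i ∈ Finset.range N,
            ENNReal.ofReal (r i ^ Module.finrank ℝ (EuclideanSpace ℝ (Fin 2))) * C := by
          apply Finset.sum_congr rfl
          intro i _
          rw [MeasureTheory.Measure.addHaar_closedBall _ _ (hr0 i)]
      _ ≤ ∑ i ∈ Finset.range N, (ENNReal.ofReal (ε ^ (2-p)) * ENNReal.ofReal (r i ^ p)) * C := by
          apply Finset.sum_le_sum
          intro i _
          apply mul_le_mul_left
          have hfr : Module.finrank ℝ (EuclideanSpace ℝ (Fin 2)) = 2 := by simp
          rw [hfr]
          rw [← ENNReal.ofReal_mul (by positivity)]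
          apply ENNReal.ofReal_le_ofReal
          have h1 : r i ^ (2:ℕ) = r i ^ ((2:ℝ)) := by
            rw [← Real.rpow_natCast (r i) 2]; norm_num
          have hsplit : r i ^ ((2:ℝ)) = r i ^ (2-p) * r i ^ p := by
            rw [← Real.rpow_add' (hr0 i) (by intro h; linarith)]
            norm_num
          rw [h1, hsplit]
          apply mul_le_mul_of_nonneg_right _ (Real.rpow_nonneg (hr0 i) p)
          exact Real.rpow_le_rpow (hr0 i) (hrε i) h2p.le
      _ = ENNReal.ofReal (ε ^ (2-p)) * (C * ∑ i ∈ Finset.range N, ENNReal.ofReal (r i ^ p)) := by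
          rw [Finset.mul_sum, Finset.mul_sum]
          apply Finset.sum_congr rfl
          intro i _
          ring
      _ ≤ ENNReal.ofReal (ε ^ (2-p)) * (C * pVariation p γ) := by
          gcongr
  have hCfin : C ≠ ⊤ := MeasureTheory.measure_ball_lt_top.ne
  have htend : Filter.Tendsto (fun ε : ℝ => ENNReal.ofReal (ε ^ (2-p)) * (C * pVariation p γ))
      (nhdsWithin 0 (Ioi 0)) (nhds 0) := by
    have h1 : Filter.Tendsto (fun ε : ℝ => ε ^ (2-p)) (nhdsWithin 0 (Ioi 0)) (nhds 0) := by
      have h := (Real.continuousAt_rpow_const 0 (2-p) (Or.inr h2p.le)).tendsto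
      rw [Real.zero_rpow h2p.ne'] at h
      exact h.mono_left nhdsWithin_le_nhds
    have h2 : Filter.Tendsto (fun ε : ℝ => ENNReal.ofReal (ε ^ (2-p)))
        (nhdsWithin 0 (Ioi 0)) (nhds 0) := by
      simpa [Function.comp_def] using (ENNReal.continuous_ofReal.tendsto 0).comp h1
    have h3 := ENNReal.Tendsto.mul_const h2
      (Or.inr (ENNReal.mul_ne_top hCfin hγ.ne))
    simpa using h3
  refine le_antisymm ?_ zero_le
  exact ge_of_tendsto htend (Filter.eventually_of_mem self_mem_nhdsWithin
    (fun ε hε => key ε hε))
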